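/- For every positive integer k and m ≡ 0 (mod 8), define the (k−1) × m array A with entries a_{i,j} given (reading rows bottom to top) by a_{i,j} = i + (j−1)k for row i ∈ {1,...,k−1} and column j ∈ {1,...,m}. Then for each row i: the sum of entries in columns j with j ≡ 0 or 1 (mod 4) equals the sum of entries in columns j with j ≡ 2 or 3 (mod 4), and the row entries are strictly increasing in j; moreover the entries of A are exactly the elements of {1, 2, ..., mk} \ {k, 2k, ..., mk}. -/

import Mathlib

lemma stmt4_aux (i k : ℕ) : ∀ n,
    ∑ j ∈ Finset.Icc 1 (4*n), (if j % 4 = 0 ∨ j % 4 = 1 then i + (j - 1) * k else 0) =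
    ∑ j ∈ Finset.Icc 1 (4*n), (if j % 4 = 2 ∨ j % 4 = 3 then i + (j - 1) * k else 0) := by
  intro n
  induction n with
  | zero => simp
  | succ n ih =>
    have h4 : 4 * (n + 1) = (4 * n + 3) + 1 := by omega
    rw [h4, Finset.sum_Icc_succ_top (by omega), Finset.sum_Icc_succ_top (by omega),
      show 4 * n + 3 = (4 * n + 2) + 1 from rfl,
      Finset.sum_Icc_succ_top (by omega), Finset.sum_Icc_succ_top (by omega),
      show 4 * n + 2 = (4 * n + 1) + 1 from rfl,
      Finset.sum_Icc_succ_top (by omega), Finset.sum_Icc_succ_top (by omega),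
      show 4 * n + 1 = (4 * n) + 1 from rfl,
      Finset.sum_Icc_succ_top (by omega), Finset.sum_Icc_succ_top (by omega)]
    have e1 : (4 * n + 1) % 4 = 1 := by omega
    have e2 : (4 * n + 2) % 4 = 2 := by omega
    have e3 : (4 * n + 3) % 4 = 3 := by omega
    have e4 : (4 * n + 3 + 1) % 4 = 0 := by omega
    have s1 : 4 * n + 1 - 1 = 4 * n := by omega
    have s2 : 4 * n + 2 - 1 = 4 * n + 1 := by omega
    have s3 : 4 * n + 3 - 1 = 4 * n + 2 := by omega
    have s4 : 4 * n + 3 + 1 - 1 = 4 * n + 3 := by omega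
    simp only [e1, e2, e3, e4, s1, s2, s3, s4]
    norm_num
    rw [ih]
    ring

theorem stmt4 (k m : ℕ) (hk : 2 ≤ k) (hm : 0 < m) (h8 : m % 8 = 0)
    (a : ℕ → ℕ → ℕ) (ha : ∀ i j, a i j = i + (j - 1) * k) :
    (∀ i, 1 ≤ i → i ≤ k - 1 →
      (∑ j ∈ (Finset.Icc 1 m).filter (fun j => j % 4 = 0 ∨ j % 4 = 1), a i j =
        ∑ j ∈ (Finset.Icc 1 m).filter (fun j => j % 4 = 2 ∨ j % 4 = 3), a i j) ∧
      (∀ j j', 1 ≤ j → j < j' → j' ≤ m → a i j < a i j')) ∧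
    (Finset.Icc 1 (k - 1)).biUnion (fun i => (Finset.Icc 1 m).image (fun j => a i j)) =
      (Finset.Icc 1 (m * k)).filter (fun x => ¬ k ∣ x) := by
  have hk0 : 0 < k := by omega
  constructor
  · intro i hi1 hi2
    constructor
    · rw [Finset.sum_filter, Finset.sum_filter]
      simp only [ha]
      obtain ⟨n, rfl⟩ : ∃ n, m = 4 * n := ⟨m / 4, by omega⟩
      exact stmt4_aux i k n
    · intro j j' hj hjj hj'
      rw [ha, ha]
      have h1 : j - 1 < j' - 1 := by omega
      exact Nat.add_lt_add_left (Nat.mul_lt_mul_of_pos_right h1 hk0) i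
  · ext x
    simp only [Finset.mem_biUnion, Finset.mem_image, Finset.mem_filter, Finset.mem_Icc, ha]
    constructor
    · rintro ⟨i, ⟨hi1, hi2⟩, j, ⟨hj1, hj2⟩, rfl⟩
      have h1 : (j - 1) * k ≤ (m - 1) * k := Nat.mul_le_mul_right _ (by omega)
      have h2 : (m - 1) * k + k = m * k := by
        have hm1 : m - 1 + 1 = m := by omega
        calc (m - 1) * k + k = (m - 1 + 1) * k := by ring
          _ = m * k := by rw [hm1]
      have hik : i < k := by omega
      have hle : i + (j - 1) * k < (m - 1) * k + k := by
        calc i + (j - 1) * k < k + (m - 1) * k := Nat.add_lt_add_of_lt_of_le hik h1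
          _ = (m - 1) * k + k := by ring
      have hmod : (i + (j - 1) * k) % k = i := by
        rw [Nat.add_mul_mod_self_right, Nat.mod_eq_of_lt hik]
      refine ⟨⟨by omega, le_of_lt (h2 ▸ hle)⟩, ?_⟩
      intro hdvd
      have := Nat.dvd_iff_mod_eq_zero.mp hdvd
      omega
    · rintro ⟨⟨hx1, hx2⟩, hdvd⟩
      have hne : x % k ≠ 0 := fun h => hdvd (Nat.dvd_iff_mod_eq_zero.mpr h)
      have hlt : x % k < k := Nat.mod_lt x hk0
      have hxlt : x < m * k := lt_of_le_of_ne hx2 (fun h => hdvd (h ▸ dvd_mul_left k m))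
      have hdiv : x / k < m := (Nat.div_lt_iff_lt_mul hk0).mpr hxlt
      refine ⟨x % k, ⟨by omega, by omega⟩, x / k + 1, ⟨Nat.le_add_left 1 _, hdiv⟩, ?_⟩
      rw [Nat.add_sub_cancel, Nat.mod_add_div']
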